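/- arXiv:math/0409514 — 3 statements merged into one kernel-verified Lean document; each statement's English description precedes it below -/
import Mathlib

section
/- Let ⋆ be a semistar operation on an integral domain D, and let I be a nonzero fractional ideal. Then I is ⋆_f-invertible if and only if there exist nonzero finitely generated fractional ideals I' ⊆ I and I'' ⊆ I^{-1} with (I' I'')^⋆ = D^⋆; moreover in that case (I')^⋆ = I^⋆ and (I'')^⋆ = (I^{-1})^⋆. -/
set_option linter.unusedSectionVars false
set_option maxHeartbeats 1000000


open Submodule

structure SemistarOperation (R K : Type*) [CommRing R] [Field K] [Algebra R K] where
  star : Submodule R K → Submodule R K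
  star_smul : ∀ (x : K), x ≠ 0 → ∀ E : Submodule R K, E ≠ ⊥ →
    star (E.map (LinearMap.mul R K x)) = (star E).map (LinearMap.mul R K x)
  star_mono : ∀ E F : Submodule R K, E ≠ ⊥ → F ≠ ⊥ → E ≤ F → star E ≤ star F
  le_star : ∀ E : Submodule R K, E ≠ ⊥ → E ≤ star E
  star_idem : ∀ E : Submodule R K, E ≠ ⊥ → star (star E) = star E

variable {R K : Type*} [CommRing R] [Field K] [Algebra R K]

def starF (s : SemistarOperation R K) (E : Submodule R K) : Submodule R K :=
  ⨆ (F : Submodule R K) (_ : F ≤ E ∧ F ≠ ⊥ ∧ F.FG), s.star F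

def IsFiniteTypeOp (s : SemistarOperation R K) : Prop :=
  ∀ E : Submodule R K, E ≠ ⊥ → s.star E = starF s E

def IsStableOp (s : SemistarOperation R K) : Prop :=
  ∀ E F : Submodule R K, E ≠ ⊥ → F ≠ ⊥ → E ⊓ F ≠ ⊥ → s.star (E ⊓ F) = s.star E ⊓ s.star F

def IsFracIdeal (I : Submodule R K) : Prop :=
  I ≠ ⊥ ∧ ∃ d : R, d ≠ 0 ∧ ∀ x ∈ I, algebraMap R K d * x ∈ (1 : Submodule R K)

def IsStarInv (s : SemistarOperation R K) (I : Submodule R K) : Prop :=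
  s.star (I * ((1 : Submodule R K) / I)) = s.star 1

def IsQuasiStarInv (s : SemistarOperation R K) (I : Submodule R K) : Prop :=
  s.star (I * (s.star 1 / I)) = s.star 1

def QuasiStarIdeal (f : Submodule R K → Submodule R K) (I : Ideal R) : Prop :=
  I ≠ ⊥ ∧ (f (Submodule.map (Algebra.linearMap R K) I)).comap (Algebra.linearMap R K) = I

def QuasiStarMax (f : Submodule R K → Submodule R K) (I : Ideal R) : Prop :=
  QuasiStarIdeal f I ∧ I ≠ ⊤ ∧ ∀ J : Ideal R, QuasiStarIdeal f J → J ≠ ⊤ → I ≤ J → I = J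

def HStarDomain (s : SemistarOperation R K) : Prop :=
  ∀ I : Ideal R, I ≠ ⊥ → s.star (Submodule.map (Algebra.linearMap R K) I) = s.star 1 →
    ∃ J : Ideal R, J ≠ ⊥ ∧ J.FG ∧ J ≤ I ∧ s.star (Submodule.map (Algebra.linearMap R K) J) = s.star 1

def locAt (Q : Ideal R) : Submodule R K :=
  span R {x : K | ∃ s : R, s ∉ Q ∧ x * algebraMap R K s = 1}

def starTilde (s : SemistarOperation R K) (E : Submodule R K) : Submodule R K :=
  ⨅ (Q : Ideal R) (_ : QuasiStarMax (starF s) Q), E * locAt Q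

variable {D K : Type*} [CommRing D] [IsDomain D] [Field K] [Algebra D K] [IsFractionRing D K]



lemma aux_mul_ne_bot {E F : Submodule D K} (hE : E ≠ ⊥) (hF : F ≠ ⊥) : E * F ≠ ⊥ := by
  rw [Submodule.ne_bot_iff] at *
  obtain ⟨x, hx, hx0⟩ := hE; obtain ⟨y, hy, hy0⟩ := hF
  exact ⟨x * y, Submodule.mul_mem_mul hx hy, mul_ne_zero hx0 hy0⟩

lemma aux_star_ne_bot (s : SemistarOperation D K) {E : Submodule D K} (hE : E ≠ ⊥) :
    s.star E ≠ ⊥ := fun h => hE (le_bot_iff.1 (h ▸ s.le_star E hE))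

lemma aux_star_mul_star (s : SemistarOperation D K) {E F : Submodule D K} (hE : E ≠ ⊥)
    (hF : F ≠ ⊥) : s.star (E * s.star F) = s.star (E * F) := by
  have hEF : E * F ≠ ⊥ := aux_mul_ne_bot hE hF
  have hEsF : E * s.star F ≠ ⊥ := aux_mul_ne_bot hE (aux_star_ne_bot s hF)
  have h2 : E * s.star F ≤ s.star (E * F) := by
    rw [Submodule.mul_le]
    intro e he g hg
    rcases eq_or_ne e 0 with rfl | he0
    · simpa using (s.star (E*F)).zero_mem
    · have hmap : F.map (LinearMap.mul D K e) ≤ E * F := by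
        rintro _ ⟨f, hf, rfl⟩
        exact Submodule.mul_mem_mul he hf
      have hmapne : F.map (LinearMap.mul D K e) ≠ ⊥ := by
        rw [Submodule.ne_bot_iff] at hF ⊢
        obtain ⟨f, hf, hf0⟩ := hF
        exact ⟨e * f, ⟨f, hf, rfl⟩, mul_ne_zero he0 hf0⟩
      have : e * g ∈ (s.star F).map (LinearMap.mul D K e) := ⟨g, hg, rfl⟩
      rw [← s.star_smul e he0 F hF] at this
      exact s.star_mono _ _ hmapne hEF hmap this
  refine le_antisymm ?_ (s.star_mono _ _ hEF hEsF
    (mul_le_mul' le_rfl (s.le_star F hF)))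
  have := s.star_mono _ _ hEsF (aux_star_ne_bot s hEF) h2
  rwa [s.star_idem _ hEF] at this

lemma aux_mem_starF (s : SemistarOperation D K) {E : Submodule D K} (hE : E ≠ ⊥) {x : K} :
    x ∈ starF s E ↔ ∃ F : Submodule D K, (F ≤ E ∧ F ≠ ⊥ ∧ F.FG) ∧ x ∈ s.star F := by
  obtain ⟨a, ha, ha0⟩ := (Submodule.ne_bot_iff E).1 hE
  have hne : Nonempty {F : Submodule D K // F ≤ E ∧ F ≠ ⊥ ∧ F.FG} :=
    ⟨⟨span D {a}, (Submodule.span_singleton_le_iff_mem a E).2 ha,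
      fun h => ha0 (Submodule.span_singleton_eq_bot.1 h), Submodule.fg_span_singleton a⟩⟩
  have hdir : Directed (· ≤ ·) fun F : {F : Submodule D K // F ≤ E ∧ F ≠ ⊥ ∧ F.FG} =>
      s.star F.1 := by
    rintro ⟨F1, h1, h1b, h1f⟩ ⟨F2, h2, h2b, h2f⟩
    have hsb : F1 ⊔ F2 ≠ ⊥ := fun h =>
      h1b (le_bot_iff.1 (h ▸ (le_sup_left : F1 ≤ F1 ⊔ F2)))
    exact ⟨⟨F1 ⊔ F2, sup_le h1 h2, hsb, h1f.sup h2f⟩,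
      s.star_mono _ _ h1b hsb le_sup_left, s.star_mono _ _ h2b hsb le_sup_right⟩
  rw [starF, iSup_subtype', Submodule.mem_iSup_of_directed _ hdir]
  constructor
  · rintro ⟨⟨F, hF⟩, hx⟩; exact ⟨F, hF, hx⟩
  · rintro ⟨F, hF, hx⟩; exact ⟨⟨F, hF⟩, hx⟩

lemma aux_le_starF (s : SemistarOperation D K) {F E : Submodule D K}
    (h : F ≤ E ∧ F ≠ ⊥ ∧ F.FG) : s.star F ≤ starF s E :=
  le_iSup_of_le F (le_iSup_of_le h le_rfl)

lemma aux_starF_mono (s : SemistarOperation D K) {E E' : Submodule D K} (h : E ≤ E') :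
    starF s E ≤ starF s E' := by
  refine iSup_le fun F => iSup_le fun hF => ?_
  exact aux_le_starF s ⟨hF.1.trans h, hF.2⟩

lemma aux_mem_mul_fg {I J : Submodule D K} {x : K} (hx : x ∈ I * J) :
    ∃ I₀ J₀ : Submodule D K, I₀ ≤ I ∧ J₀ ≤ J ∧ I₀.FG ∧ J₀.FG ∧ x ∈ I₀ * J₀ := by
  refine Submodule.mul_induction_on hx ?_ ?_
  · intro m hm n hn
    exact ⟨span D {m}, span D {n}, (Submodule.span_singleton_le_iff_mem m I).2 hm,
      (Submodule.span_singleton_le_iff_mem n J).2 hn, Submodule.fg_span_singleton m,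
      Submodule.fg_span_singleton n,
      Submodule.mul_mem_mul (Submodule.mem_span_singleton_self m)
        (Submodule.mem_span_singleton_self n)⟩
  · rintro x y ⟨I₁, J₁, hI₁, hJ₁, hI₁f, hJ₁f, hx⟩ ⟨I₂, J₂, hI₂, hJ₂, hI₂f, hJ₂f, hy⟩
    refine ⟨I₁ ⊔ I₂, J₁ ⊔ J₂, sup_le hI₁ hI₂, sup_le hJ₁ hJ₂, hI₁f.sup hI₂f, hJ₁f.sup hJ₂f,
      Submodule.add_mem _ ?_ ?_⟩
    · exact (mul_le_mul' le_sup_left le_sup_left : I₁ * J₁ ≤ (I₁ ⊔ I₂) * (J₁ ⊔ J₂)) hx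
    · exact (mul_le_mul' le_sup_right le_sup_right : I₂ * J₂ ≤ (I₁ ⊔ I₂) * (J₁ ⊔ J₂)) hy

lemma aux_fg_le_mul {I J F : Submodule D K} (hF : F ≤ I * J) (hfg : F.FG) :
    ∃ I₀ J₀ : Submodule D K, I₀ ≤ I ∧ J₀ ≤ J ∧ I₀.FG ∧ J₀.FG ∧ F ≤ I₀ * J₀ := by
  classical
  obtain ⟨T, rfl⟩ := hfg
  induction T using Finset.induction_on with
  | empty => exact ⟨⊥, ⊥, bot_le, bot_le, Submodule.fg_bot, Submodule.fg_bot, by simp⟩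
  | @insert a T ha ih =>
    have hT : span D (T : Set K) ≤ I * J :=
      le_trans (Submodule.span_mono (by simp)) hF
    obtain ⟨I₁, J₁, hI₁, hJ₁, hI₁f, hJ₁f, hle₁⟩ := ih hT
    have haI : a ∈ I * J := hF (Submodule.subset_span (by simp))
    obtain ⟨I₂, J₂, hI₂, hJ₂, hI₂f, hJ₂f, ha₂⟩ := aux_mem_mul_fg haI
    refine ⟨I₁ ⊔ I₂, J₁ ⊔ J₂, sup_le hI₁ hI₂, sup_le hJ₁ hJ₂, hI₁f.sup hI₂f, hJ₁f.sup hJ₂f, ?_⟩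
    rw [Finset.coe_insert, Submodule.span_insert]
    refine sup_le ?_ ?_
    · exact le_trans ((Submodule.span_singleton_le_iff_mem a _).2 ha₂)
        (mul_le_mul' le_sup_right le_sup_right)
    · exact le_trans hle₁ (mul_le_mul' le_sup_left le_sup_left)

theorem stmt7 (s : SemistarOperation D K) (I : Submodule D K) (hI : IsFracIdeal I) :
    (starF s (I * ((1 : Submodule D K) / I)) = starF s 1 ↔
      ∃ I' I'' : Submodule D K, I' ≤ I ∧ I'' ≤ (1 : Submodule D K) / I ∧
        I' ≠ ⊥ ∧ I'' ≠ ⊥ ∧ I'.FG ∧ I''.FG ∧ s.star (I' * I'') = s.star 1) ∧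
    (∀ I' I'' : Submodule D K, I' ≤ I → I'' ≤ (1 : Submodule D K) / I →
      I' ≠ ⊥ → I'' ≠ ⊥ → I'.FG → I''.FG → s.star (I' * I'') = s.star 1 →
      s.star I' = s.star I ∧ s.star I'' = s.star ((1 : Submodule D K) / I)) := by
  obtain ⟨hIb, d, hd0, hd⟩ := hI
  have hone : (1 : Submodule D K) ≠ ⊥ := by
    rw [Submodule.ne_bot_iff]
    exact ⟨1, Submodule.one_le.1 le_rfl, one_ne_zero⟩
  have hdiv : (1 : Submodule D K) / I ≠ ⊥ := by
    rw [Submodule.ne_bot_iff]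
    refine ⟨algebraMap D K d, Submodule.mem_div_iff_forall_mul_mem.2 fun y hy => hd y hy, ?_⟩
    intro h
    exact hd0 (IsFractionRing.injective D K (by rw [h, map_zero]))
  have hprod : I * ((1 : Submodule D K) / I) ≠ ⊥ := aux_mul_ne_bot hIb hdiv
  have hle1 : I * ((1 : Submodule D K) / I) ≤ 1 := Submodule.mul_one_div_le_one
  -- the "moreover" part, proved first
  have part2 : ∀ I' I'' : Submodule D K, I' ≤ I → I'' ≤ (1 : Submodule D K) / I →
      I' ≠ ⊥ → I'' ≠ ⊥ → I'.FG → I''.FG → s.star (I' * I'') = s.star 1 →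
      s.star I' = s.star I ∧ s.star I'' = s.star ((1 : Submodule D K) / I) := by
    intro I' I'' hle' hle'' hb' hb'' _ _ hstar
    have hpb : I' * I'' ≠ ⊥ := aux_mul_ne_bot hb' hb''
    constructor
    · refine le_antisymm (s.star_mono _ _ hb' hIb hle') ?_
      have h1 : s.star I = s.star (I * 1) := by rw [mul_one]
      have h2 : s.star (I * 1) ≤ s.star (I * s.star 1) :=
        s.star_mono _ _ (aux_mul_ne_bot hIb hone)
          (aux_mul_ne_bot hIb (aux_star_ne_bot s hone))
          (mul_le_mul' le_rfl (s.le_star 1 hone))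
      have h3 : s.star (I * s.star 1) = s.star (I * (I' * I'')) := by
        rw [← hstar, aux_star_mul_star s hIb hpb]
      have h4 : I * (I' * I'') ≤ I' := by
        have : I * (I' * I'') = I' * (I * I'') := by ring
        rw [this]
        calc I' * (I * I'') ≤ I' * (I * ((1 : Submodule D K) / I)) :=
              mul_le_mul' le_rfl (mul_le_mul' le_rfl hle'')
          _ ≤ I' * 1 := mul_le_mul' le_rfl hle1
          _ = I' := mul_one I'
      have h5 : s.star (I * (I' * I'')) ≤ s.star I' :=
        s.star_mono _ _ (aux_mul_ne_bot hIb hpb) hb' h4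
      rw [h1]; exact le_trans h2 (le_trans (le_of_eq h3) h5)
    · refine le_antisymm (s.star_mono _ _ hb'' hdiv hle'') ?_
      have h1 : s.star ((1 : Submodule D K) / I) = s.star (((1 : Submodule D K) / I) * 1) := by
        rw [mul_one]
      have h2 : s.star (((1 : Submodule D K) / I) * 1) ≤
          s.star (((1 : Submodule D K) / I) * s.star 1) :=
        s.star_mono _ _ (aux_mul_ne_bot hdiv hone)
          (aux_mul_ne_bot hdiv (aux_star_ne_bot s hone))
          (mul_le_mul' le_rfl (s.le_star 1 hone))
      have h3 : s.star (((1 : Submodule D K) / I) * s.star 1) =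
          s.star (((1 : Submodule D K) / I) * (I' * I'')) := by
        rw [← hstar, aux_star_mul_star s hdiv hpb]
      have h4 : ((1 : Submodule D K) / I) * (I' * I'') ≤ I'' := by
        have : ((1 : Submodule D K) / I) * (I' * I'') =
            I'' * (I' * ((1 : Submodule D K) / I)) := by ring
        rw [this]
        calc I'' * (I' * ((1 : Submodule D K) / I))
            ≤ I'' * (I * ((1 : Submodule D K) / I)) :=
              mul_le_mul' le_rfl (mul_le_mul' hle' le_rfl)
          _ ≤ I'' * 1 := mul_le_mul' le_rfl hle1
          _ = I'' := mul_one I''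
      have h5 : s.star (((1 : Submodule D K) / I) * (I' * I'')) ≤ s.star I'' :=
        s.star_mono _ _ (aux_mul_ne_bot hdiv hpb) hb'' h4
      rw [h1]; exact le_trans h2 (le_trans (le_of_eq h3) h5)
  refine ⟨⟨?_, ?_⟩, part2⟩
  · -- forward direction
    intro h
    have h1fg : (1 : Submodule D K).FG := by
      rw [Submodule.one_eq_span]; exact Submodule.fg_span_singleton 1
    have h1mem : (1 : K) ∈ starF s (I * ((1 : Submodule D K) / I)) := by
      rw [h]
      exact aux_le_starF s ⟨le_rfl, hone, h1fg⟩
        (s.le_star 1 hone (Submodule.one_le.1 le_rfl))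
    obtain ⟨F, ⟨hFle, hFb, hFfg⟩, hF1⟩ := (aux_mem_starF s hprod).1 h1mem
    obtain ⟨I₀, J₀, hI₀, hJ₀, hI₀f, hJ₀f, hFle'⟩ := aux_fg_le_mul hFle hFfg
    obtain ⟨a, ha, ha0⟩ := (Submodule.ne_bot_iff I).1 hIb
    obtain ⟨b, hb, hb0⟩ := (Submodule.ne_bot_iff _).1 hdiv
    refine ⟨I₀ ⊔ Submodule.span D {a}, J₀ ⊔ Submodule.span D {b},
      sup_le hI₀ ((Submodule.span_singleton_le_iff_mem a I).2 ha),
      sup_le hJ₀ ((Submodule.span_singleton_le_iff_mem b _).2 hb), ?_, ?_, ?_, ?_, ?_⟩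
    · intro hb'
      exact ha0 (Submodule.span_singleton_eq_bot.1
        (le_bot_iff.1 (hb' ▸ (le_sup_right : Submodule.span D {a} ≤ _))))
    · intro hb'
      exact hb0 (Submodule.span_singleton_eq_bot.1
        (le_bot_iff.1 (hb' ▸ (le_sup_right : Submodule.span D {b} ≤ _))))
    · exact hI₀f.sup (Submodule.fg_span_singleton a)
    · exact hJ₀f.sup (Submodule.fg_span_singleton b)
    · set I' := I₀ ⊔ Submodule.span D {a}
      set I'' := J₀ ⊔ Submodule.span D {b}
      have hb' : I' ≠ ⊥ := (Submodule.ne_bot_iff I').2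
        ⟨a, (le_sup_right : Submodule.span D {a} ≤ I') (Submodule.mem_span_singleton_self a), ha0⟩
      have hle' : I' ≤ I := sup_le hI₀ ((Submodule.span_singleton_le_iff_mem a I).2 ha)
      have hle'' : I'' ≤ (1 : Submodule D K) / I :=
        sup_le hJ₀ ((Submodule.span_singleton_le_iff_mem b _).2 hb)
      have hb'' : I'' ≠ ⊥ := (Submodule.ne_bot_iff I'').2
        ⟨b, (le_sup_right : Submodule.span D {b} ≤ I'') (Submodule.mem_span_singleton_self b), hb0⟩
      have hpb : I' * I'' ≠ ⊥ := aux_mul_ne_bot hb' hb''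
      have hFle'' : F ≤ I' * I'' :=
        le_trans hFle' (mul_le_mul' le_sup_left le_sup_left)
      have h1m : (1 : K) ∈ s.star (I' * I'') :=
        s.star_mono _ _ hFb hpb hFle'' hF1
      refine le_antisymm ?_ ?_
      · exact s.star_mono _ _ hpb hone
          (le_trans (mul_le_mul' hle' hle'') hle1)
      · have : (1 : Submodule D K) ≤ s.star (I' * I'') := Submodule.one_le.2 h1m
        have := s.star_mono _ _ hone (aux_star_ne_bot s hpb) this
        rwa [s.star_idem _ hpb] at this
  · -- backward direction
    rintro ⟨I', I'', hle', hle'', hb', hb'', hfg', hfg'', hstar⟩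
    have hpb : I' * I'' ≠ ⊥ := aux_mul_ne_bot hb' hb''
    have hple : I' * I'' ≤ I * ((1 : Submodule D K) / I) := mul_le_mul' hle' hle''
    refine le_antisymm (aux_starF_mono s hle1) ?_
    refine iSup_le fun F => iSup_le fun hF => ?_
    calc s.star F ≤ s.star 1 := s.star_mono _ _ hF.2.1 hone hF.1
      _ = s.star (I' * I'') := hstar.symm
      _ ≤ starF s (I * ((1 : Submodule D K) / I)) :=
          aux_le_starF s ⟨hple, hpb, hfg'.mul hfg''⟩
end

section
/- Let ⋆ be a semistar operation on an integral domain D. Then D is an H(⋆)-domain if and only if every ⋆-invertible fractional ideal of D is ⋆_f-invertible. -/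
open Submodule

variable {R K : Type*} [CommRing R] [Field K] [Algebra R K]

variable {D K : Type*} [CommRing D] [IsDomain D] [Field K] [Algebra D K] [IsFractionRing D K]

section Helpers

variable (s : SemistarOperation D K)

lemma one_ne_bot' : (1 : Submodule D K) ≠ ⊥ := by
  intro h
  have h1 : (1 : K) ∈ (1 : Submodule D K) := Submodule.one_le.mp le_rfl
  rw [h] at h1
  simpa using h1

lemma map_mul_span_one (x : K) :
    (Submodule.map (LinearMap.mul D K x) (1 : Submodule D K)) = span D {x} := by
  rw [Submodule.one_eq_span, Submodule.map_span, Set.image_singleton]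
  simp

lemma star_ne_bot {E : Submodule D K} (hE : E ≠ ⊥) : s.star E ≠ ⊥ := by
  intro h
  exact hE (le_bot_iff.mp (h ▸ s.le_star E hE))

lemma mul_star_one_le {J : Submodule D K} (hJ : J ≠ ⊥) : J * s.star 1 ≤ s.star J := by
  rw [Submodule.mul_le]
  intro j hj d hd
  by_cases hj0 : j = 0
  · rw [hj0, zero_mul]; exact (s.star J).zero_mem
  · have hspan : span D {j} ≠ ⊥ := by
      simpa [Submodule.span_singleton_eq_bot] using hj0
    have h1 := s.star_smul j hj0 1 one_ne_bot'
    rw [map_mul_span_one] at h1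
    have hm : j * d ∈ Submodule.map (LinearMap.mul D K j) (s.star 1) :=
      ⟨d, hd, by simp⟩
    rw [← h1] at hm
    exact s.star_mono _ _ hspan hJ (by simpa [Submodule.span_le] using hj) hm

lemma div_le_star_one {I : Submodule D K} (hI : I ≠ ⊥) (hIs : s.star I = s.star 1) :
    (1 : Submodule D K) / I ≤ s.star 1 := by
  intro x hx
  by_cases hx0 : x = 0
  · rw [hx0]; exact (s.star 1).zero_mem
  · have hmap : Submodule.map (LinearMap.mul D K x) I ≤ 1 := by
      rintro _ ⟨y, hy, rfl⟩
      exact Submodule.mem_div_iff_forall_mul_mem.mp hx y hy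
    have hmb : Submodule.map (LinearMap.mul D K x) I ≠ ⊥ := by
      intro h
      obtain ⟨a, ha, ha0⟩ := Submodule.exists_mem_ne_zero_of_ne_bot hI
      have : x * a ∈ (⊥ : Submodule D K) := h ▸ ⟨a, ha, by simp⟩
      exact ha0 (by simpa [hx0] using (Submodule.mem_bot D).mp this)
    have hle := s.star_mono _ _ hmb one_ne_bot' hmap
    rw [s.star_smul x hx0 I hI, hIs] at hle
    have h1 : (1 : K) ∈ s.star 1 := s.le_star 1 one_ne_bot' (Submodule.one_le.mp le_rfl)
    have : x * 1 ∈ Submodule.map (LinearMap.mul D K x) (s.star 1) := ⟨1, h1, by simp⟩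
    simpa using hle this

lemma star_eq_star_one {J : Submodule D K} (hJ1 : J ≤ 1) (hJ : J ≠ ⊥)
    (h1 : (1 : K) ∈ s.star J) : s.star J = s.star 1 := by
  refine le_antisymm (s.star_mono _ _ hJ one_ne_bot' hJ1) ?_
  have hspan : span D {(1 : K)} ≤ s.star J := by simpa [Submodule.span_le] using h1
  have hone : (1 : Submodule D K) ≤ s.star J := by rwa [Submodule.one_eq_span]
  calc s.star 1 ≤ s.star (s.star J) :=
        s.star_mono _ _ one_ne_bot' (star_ne_bot s hJ) hone
    _ = s.star J := s.star_idem J hJ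

lemma starF_one : starF s 1 = s.star 1 := by
  refine le_antisymm ?_ ?_
  · refine iSup_le fun F => iSup_le fun hF => ?_
    exact s.star_mono _ _ hF.2.1 one_ne_bot' hF.1
  · refine le_iSup_of_le 1 (le_iSup_of_le ⟨le_rfl, one_ne_bot', ?_⟩ le_rfl)
    rw [Submodule.one_eq_span]
    exact Submodule.fg_span_singleton 1

end Helpers
theorem stmt10 (s : SemistarOperation D K) :
    HStarDomain s ↔
    ∀ I : Submodule D K, IsFracIdeal I → IsStarInv s I →
      starF s (I * ((1 : Submodule D K) / I)) = starF s 1 := by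
  have halg : Function.Injective (algebraMap D K) := IsFractionRing.injective D K
  have hmapbot : ∀ J : Ideal D, J ≠ ⊥ →
      Submodule.map (Algebra.linearMap D K) J ≠ (⊥ : Submodule D K) := by
    intro J hJ h
    obtain ⟨a, ha, ha0⟩ := Submodule.exists_mem_ne_zero_of_ne_bot hJ
    have hm : algebraMap D K a ∈ (⊥ : Submodule D K) := h ▸ ⟨a, ha, rfl⟩
    rw [Submodule.mem_bot] at hm
    exact ha0 (halg (by simpa using hm))
  have hmaple : ∀ J : Ideal D,
      Submodule.map (Algebra.linearMap D K) J ≤ (1 : Submodule D K) := by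
    rintro J _ ⟨a, _, rfl⟩
    rw [Submodule.one_eq_range]
    exact ⟨a, rfl⟩
  constructor
  · -- HStarDomain → every ⋆-invertible is ⋆_f-invertible
    intro hH I hfrac hinv
    obtain ⟨hIbot, d, hd0, hd⟩ := hfrac
    have hE1 : I * ((1 : Submodule D K) / I) ≤ 1 := by
      rw [Submodule.mul_le]
      intro a ha b hb
      rw [mul_comm]
      exact Submodule.mem_div_iff_forall_mul_mem.mp hb a ha
    have hEbot : I * ((1 : Submodule D K) / I) ≠ ⊥ := by
      obtain ⟨a, ha, ha0⟩ := Submodule.exists_mem_ne_zero_of_ne_bot hIbot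
      have hb : algebraMap D K d ∈ (1 : Submodule D K) / I :=
        Submodule.mem_div_iff_forall_mul_mem.mpr fun y hy => hd y hy
      intro h
      have hm : a * algebraMap D K d ∈ (⊥ : Submodule D K) :=
        h ▸ Submodule.mul_mem_mul ha hb
      rw [Submodule.mem_bot] at hm
      have hdne : algebraMap D K d ≠ 0 := fun h0 => hd0 (halg (by simpa using h0))
      exact (mul_ne_zero ha0 hdne) hm
    set I0 : Ideal D :=
      Submodule.comap (Algebra.linearMap D K) (I * ((1 : Submodule D K) / I)) with hI0
    have hmap : Submodule.map (Algebra.linearMap D K) I0 = I * ((1 : Submodule D K) / I) := by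
      rw [hI0, Submodule.map_comap_eq, ← Submodule.one_eq_range, inf_eq_right.mpr hE1]
    have hI0bot : I0 ≠ ⊥ := by
      intro h
      rw [h, Submodule.map_bot] at hmap
      exact hEbot hmap.symm
    obtain ⟨J, hJbot, hJfg, hJle, hJstar⟩ := hH I0 hI0bot (by rw [hmap]; exact hinv)
    have hJE : Submodule.map (Algebra.linearMap D K) J ≤ I * ((1 : Submodule D K) / I) :=
      hmap ▸ Submodule.map_mono hJle
    refine le_antisymm ?_ ?_
    · refine iSup_le fun F => iSup_le fun hF => ?_
      exact le_iSup_of_le F (le_iSup_of_le ⟨hF.1.trans hE1, hF.2.1, hF.2.2⟩ le_rfl)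
    · rw [starF_one, ← hJstar]
      exact le_iSup_of_le _
        (le_iSup_of_le ⟨hJE, hmapbot J hJbot, Submodule.FG.map _ hJfg⟩ le_rfl)
  · -- converse
    intro hmain I hIbot hIstar
    set Ih := Submodule.map (Algebra.linearMap D K) I with hIh
    have hIhbot : Ih ≠ ⊥ := hmapbot I hIbot
    have hIh1 : Ih ≤ 1 := hmaple I
    have hfrac : IsFracIdeal Ih :=
      ⟨hIhbot, 1, one_ne_zero, fun x hx => by simpa using hIh1 hx⟩
    have hone_mem_div : (1 : K) ∈ (1 : Submodule D K) / Ih :=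
      Submodule.mem_div_iff_forall_mul_mem.mpr fun y hy => by simpa using hIh1 hy
    have hE1 : Ih * ((1 : Submodule D K) / Ih) ≤ 1 := by
      rw [Submodule.mul_le]
      intro a ha b hb
      rw [mul_comm]
      exact Submodule.mem_div_iff_forall_mul_mem.mp hb a ha
    have hIle : Ih ≤ Ih * ((1 : Submodule D K) / Ih) := fun a ha => by
      simpa using Submodule.mul_mem_mul ha hone_mem_div
    have hEbot : Ih * ((1 : Submodule D K) / Ih) ≠ ⊥ := fun h =>
      hIhbot (le_bot_iff.mp (h ▸ hIle))
    have hinv : IsStarInv s Ih := by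
      refine le_antisymm (s.star_mono _ _ hEbot one_ne_bot' hE1) ?_
      rw [← hIstar]
      exact s.star_mono _ _ hIhbot hEbot hIle
    have hone : (1 : K) ∈ starF s (Ih * ((1 : Submodule D K) / Ih)) := by
      rw [hmain Ih hfrac hinv, starF_one]
      exact s.le_star 1 one_ne_bot' (Submodule.one_le.mp le_rfl)
    -- extract a finitely generated F with 1 ∈ star F
    set P : Submodule D K → Prop :=
      fun F => F ≤ Ih * ((1 : Submodule D K) / Ih) ∧ F ≠ ⊥ ∧ F.FG with hP
    have hNE : Nonempty (Subtype P) := by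
      obtain ⟨a, ha, ha0⟩ := Submodule.exists_mem_ne_zero_of_ne_bot hIhbot
      exact ⟨⟨span D {a}, (Submodule.span_le.mpr (by simpa using ha)).trans hIle,
        by simpa [Submodule.span_singleton_eq_bot] using ha0,
        Submodule.fg_span_singleton a⟩⟩
    have hdir : Directed (· ≤ ·) fun x : Subtype P => s.star x.1 := by
      rintro ⟨F1, h1⟩ ⟨F2, h2⟩
      refine ⟨⟨F1 ⊔ F2, sup_le h1.1 h2.1,
        fun h => h1.2.1 (le_bot_iff.mp (h ▸ le_sup_left)), h1.2.2.sup h2.2.2⟩,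
        s.star_mono _ _ h1.2.1 (fun h => h1.2.1 (le_bot_iff.mp (h ▸ le_sup_left))) le_sup_left,
        s.star_mono _ _ h2.2.1 (fun h => h1.2.1 (le_bot_iff.mp (h ▸ le_sup_left))) le_sup_right⟩
    have hone' : (1 : K) ∈ ⨆ x : Subtype P, s.star x.1 := by
      rw [iSup_subtype]
      exact hone
    obtain ⟨⟨F, hFle, hFbot, hFfg⟩, hmemF⟩ :=
      (Submodule.mem_iSup_of_directed _ hdir).mp hone'
    -- F is compact, and Ih * (1/Ih) is a directed sSup
    set S : Set (Submodule D K) :=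
      (fun J : Ideal D => Submodule.map (Algebra.linearMap D K) J *
        ((1 : Submodule D K) / Ih)) '' {J | J.FG ∧ J ≤ I} with hS
    have hSne : S.Nonempty := ⟨_, ⟨⊥, ⟨Submodule.fg_bot, bot_le⟩, rfl⟩⟩
    have hSdir : DirectedOn (· ≤ ·) S := by
      rintro _ ⟨J1, hJ1, rfl⟩ _ ⟨J2, hJ2, rfl⟩
      exact ⟨_, ⟨J1 ⊔ J2, ⟨Submodule.FG.sup hJ1.1 hJ2.1, sup_le hJ1.2 hJ2.2⟩, rfl⟩,
        mul_le_mul' (Submodule.map_mono le_sup_left) le_rfl,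
        mul_le_mul' (Submodule.map_mono le_sup_right) le_rfl⟩
    have hFsSup : F ≤ sSup S := by
      refine hFle.trans ?_
      rw [Submodule.mul_le]
      rintro _ ⟨i, hi, rfl⟩ b hb
      refine le_sSup (show _ ∈ S from
        ⟨Ideal.span {i}, ⟨Submodule.fg_span_singleton i, Ideal.span_le.mpr (by simpa using hi)⟩, rfl⟩) ?_
      exact Submodule.mul_mem_mul ⟨i, Ideal.mem_span_singleton_self i, rfl⟩ hb
    obtain ⟨x, ⟨J, ⟨hJfg, hJleI⟩, rfl⟩, hFx⟩ :=
      (CompleteLattice.isCompactElement_iff_le_of_directed_sSup_le (Submodule D K) F).mp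
        ((Submodule.fg_iff_compact F).mp hFfg) S hSne hSdir hFsSup
    dsimp only at hFx
    have hJbot : J ≠ ⊥ := by
      rintro rfl
      rw [Submodule.map_bot, bot_mul] at hFx
      exact hFbot (le_bot_iff.mp hFx)
    have hJhbot := hmapbot J hJbot
    have hxbot : Submodule.map (Algebra.linearMap D K) J *
        ((1 : Submodule D K) / Ih) ≠ ⊥ := fun h => hFbot (le_bot_iff.mp (h ▸ hFx))
    have hxle : Submodule.map (Algebra.linearMap D K) J * ((1 : Submodule D K) / Ih) ≤
        s.star (Submodule.map (Algebra.linearMap D K) J) :=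
      (mul_le_mul' le_rfl (div_le_star_one s hIhbot hIstar)).trans
        (mul_star_one_le s hJhbot)
    have hone_star : (1 : K) ∈ s.star (Submodule.map (Algebra.linearMap D K) J) := by
      have h1 := s.star_mono _ _ hFbot hxbot hFx
      have h2 := s.star_mono _ _ hxbot (star_ne_bot s hJhbot) hxle
      rw [s.star_idem _ hJhbot] at h2
      exact h2 (h1 hmemF)
    exact ⟨J, hJbot, hJfg, hJleI, star_eq_star_one s (hmaple J) hJhbot hone_star⟩
end

section
/- Let ⋆ be a stable semistar operation on an integral domain D and let I be a nonzero finitely generated fractional ideal of D. Then I is quasi-⋆-invertible if and only if I is ⋆-invertible. -/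
open Submodule

variable {R K : Type*} [CommRing R] [Field K] [Algebra R K]

variable {D K : Type*} [CommRing D] [IsDomain D] [Field K] [Algebra D K] [IsFractionRing D K]


set_option linter.unusedSectionVars false
set_option linter.unnecessarySimpa false

section MyAux

variable {D K : Type*} [CommRing D] [IsDomain D] [Field K] [Algebra D K] [IsFractionRing D K]

private lemma my_ne_bot_mono {A B : Submodule D K} (hAB : A ≤ B) (hA : A ≠ ⊥) : B ≠ ⊥ :=
  fun h => hA (le_bot_iff.mp (h ▸ hAB))

private lemma my_inf_ne_bot {A B : Submodule D K} (hA : A ≠ ⊥) (hB : B ≠ ⊥) : A ⊓ B ≠ ⊥ := by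
  obtain ⟨u, hu, hu0⟩ := A.ne_bot_iff.mp hA
  obtain ⟨v, hv, hv0⟩ := B.ne_bot_iff.mp hB
  obtain ⟨a, b, hb, hab⟩ := IsFractionRing.div_surjective (A := D) (v / u)
  have hb0 : algebraMap D K b ≠ 0 :=
    IsFractionRing.to_map_ne_zero_of_mem_nonZeroDivisors hb
  have key : algebraMap D K a * u = v * algebraMap D K b :=
    (div_eq_div_iff hb0 hu0).mp hab
  have hne : algebraMap D K a * u ≠ 0 := by
    rw [key]; exact mul_ne_zero hv0 hb0
  rw [Submodule.ne_bot_iff]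
  refine ⟨algebraMap D K a * u, ⟨?_, ?_⟩, hne⟩
  · rw [← Algebra.smul_def]; exact A.smul_mem a hu
  · rw [key, mul_comm, ← Algebra.smul_def]; exact B.smul_mem b hv

private lemma my_mul_ne_bot {A B : Submodule D K} (hA : A ≠ ⊥) (hB : B ≠ ⊥) : A * B ≠ ⊥ := by
  obtain ⟨u, hu, hu0⟩ := A.ne_bot_iff.mp hA
  obtain ⟨v, hv, hv0⟩ := B.ne_bot_iff.mp hB
  exact (A * B).ne_bot_iff.mpr ⟨u * v, Submodule.mul_mem_mul hu hv, mul_ne_zero hu0 hv0⟩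

private lemma my_comap_eq_map_inv {x : K} (hx : x ≠ 0) (E : Submodule D K) :
    Submodule.comap (LinearMap.mul D K x) E = Submodule.map (LinearMap.mul D K x⁻¹) E := by
  ext z
  simp only [Submodule.mem_comap, Submodule.mem_map, LinearMap.mul_apply']
  constructor
  · intro h
    exact ⟨x * z, h, by field_simp⟩
  · rintro ⟨e, he, rfl⟩
    rwa [show x * (x⁻¹ * e) = e by field_simp]

private lemma my_map_ne_bot {x : K} (hx : x ≠ 0) {E : Submodule D K} (hE : E ≠ ⊥) :
    Submodule.map (LinearMap.mul D K x) E ≠ ⊥ := by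
  obtain ⟨e, he, he0⟩ := E.ne_bot_iff.mp hE
  exact Submodule.ne_bot_iff _ |>.mpr
    ⟨x * e, ⟨e, he, by simp [LinearMap.mul_apply']⟩, mul_ne_zero hx he0⟩

private lemma my_comap_ne_bot {x : K} (hx : x ≠ 0) {E : Submodule D K} (hE : E ≠ ⊥) :
    Submodule.comap (LinearMap.mul D K x) E ≠ ⊥ := by
  rw [my_comap_eq_map_inv hx]
  exact my_map_ne_bot (inv_ne_zero hx) hE

private lemma my_star_comap (s : SemistarOperation D K) {x : K} (hx : x ≠ 0)
    {E : Submodule D K} (hE : E ≠ ⊥) :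
    s.star (Submodule.comap (LinearMap.mul D K x) E)
      = Submodule.comap (LinearMap.mul D K x) (s.star E) := by
  rw [my_comap_eq_map_inv hx, my_comap_eq_map_inv hx,
    s.star_smul x⁻¹ (inv_ne_zero hx) E hE]

private lemma my_div_eq_iInf (E : Submodule D K) (S : Finset K) :
    E / Submodule.span D (S : Set K) = ⨅ x ∈ S, Submodule.comap (LinearMap.mul D K x) E := by
  ext z
  simp only [Submodule.mem_div_iff_forall_mul_mem, Submodule.mem_iInf, Submodule.mem_comap,
    LinearMap.mul_apply']
  constructor
  · intro h x hx
    rw [mul_comm]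
    exact h x (Submodule.subset_span hx)
  · intro h y hy
    have hspan : Submodule.span D (S : Set K) ≤ Submodule.comap (LinearMap.mul D K z) E :=
      Submodule.span_le.mpr fun x hx => by
        simpa [LinearMap.mul_apply', mul_comm] using h x hx
    simpa [LinearMap.mul_apply'] using hspan hy

private lemma my_finset_inf_ne_bot {ι : Type*} (S : Finset ι) (f : ι → Submodule D K)
    (h : ∀ i ∈ S, f i ≠ ⊥) : (⨅ i ∈ S, f i) ≠ ⊥ := by
  classical
  induction S using Finset.induction with
  | empty => simpa using (Submodule.bot_ne_top (R := D) (M := K)).symm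
  | @insert a T ha ih =>
    rw [Finset.iInf_insert]
    exact my_inf_ne_bot (h a (Finset.mem_insert_self a T))
      (ih fun i hi => h i (Finset.mem_insert_of_mem hi))

private lemma my_star_finset_inf (s : SemistarOperation D K) (hs : IsStableOp s)
    {ι : Type*} (S : Finset ι) (f : ι → Submodule D K) :
    S.Nonempty → (∀ i ∈ S, f i ≠ ⊥) →
      s.star (⨅ i ∈ S, f i) = ⨅ i ∈ S, s.star (f i) := by
  classical
  induction S using Finset.induction with
  | empty => intro hS _; exact absurd hS (by simp)
  | @insert a T ha ih =>
    intro _ h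
    rcases T.eq_empty_or_nonempty with rfl | hT
    · simp
    · have hfa : f a ≠ ⊥ := h a (Finset.mem_insert_self a T)
      have hT' : ∀ i ∈ T, f i ≠ ⊥ := fun i hi => h i (Finset.mem_insert_of_mem hi)
      rw [Finset.iInf_insert, Finset.iInf_insert,
        hs _ _ hfa (my_finset_inf_ne_bot T f hT')
          (my_inf_ne_bot hfa (my_finset_inf_ne_bot T f hT')),
        ih hT hT']

private lemma my_star_div (s : SemistarOperation D K) (hs : IsStableOp s)
    {E I : Submodule D K} (hE : E ≠ ⊥) (hI : I ≠ ⊥) (hfg : I.FG) :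
    s.star (E / I) = s.star E / I := by
  classical
  obtain ⟨S, rfl⟩ := hfg
  set T := S.filter (fun x => x ≠ 0) with hTdef
  have hx0 : ∀ x ∈ T, x ≠ 0 := fun x hx => (Finset.mem_filter.mp hx).2
  have hspan : Submodule.span D (T : Set K) = Submodule.span D (S : Set K) := by
    apply le_antisymm
    · exact Submodule.span_mono (by exact_mod_cast Finset.filter_subset _ S)
    · rw [Submodule.span_le]
      intro x hx
      by_cases hx0' : x = 0
      · simp [hx0']
      · exact Submodule.subset_span (Finset.mem_coe.mpr (Finset.mem_filter.mpr ⟨hx, hx0'⟩))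
  have hTne : T.Nonempty := by
    by_contra hc
    rw [Finset.not_nonempty_iff_eq_empty] at hc
    apply hI
    rw [← hspan, hc]
    simp
  rw [← hspan, my_div_eq_iInf, my_div_eq_iInf,
    my_star_finset_inf s hs T _ hTne (fun x hx => my_comap_ne_bot (hx0 x hx) hE)]
  exact iInf_congr fun x => iInf_congr fun hx => my_star_comap s (hx0 x hx) hE

private lemma my_mul_star_le (s : SemistarOperation D K) {A F : Submodule D K}
    (hF : F ≠ ⊥) (hAF : A * F ≠ ⊥) : A * s.star F ≤ s.star (A * F) := by
  rw [Submodule.mul_le]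
  intro x hx y hy
  by_cases hx0 : x = 0
  · simpa [hx0] using (s.star (A * F)).zero_mem
  have h1 : x * y ∈ Submodule.map (LinearMap.mul D K x) (s.star F) :=
    ⟨y, hy, by simp [LinearMap.mul_apply']⟩
  rw [← s.star_smul x hx0 F hF] at h1
  have h2 : Submodule.map (LinearMap.mul D K x) F ≤ A * F := by
    rintro z ⟨f, hf, rfl⟩
    exact Submodule.mul_mem_mul hx hf
  exact s.star_mono _ _ (my_map_ne_bot hx0 hF) hAF h2 h1

end MyAux

theorem stmt15 (s : SemistarOperation D K) (I : Submodule D K)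
    (hs : IsStableOp s) (hI : IsFracIdeal I) (hfg : I.FG) :
    IsQuasiStarInv s I ↔ IsStarInv s I := by
  obtain ⟨hIne, d, hd, hdI⟩ := hI
  have h1 : (1 : Submodule D K) ≠ ⊥ :=
    Submodule.ne_bot_iff _ |>.mpr ⟨1, Submodule.mem_one.mpr ⟨1, map_one _⟩, one_ne_zero⟩
  have hstar1 : s.star 1 ≠ ⊥ := my_ne_bot_mono (s.le_star 1 h1) h1
  have hd0 : algebraMap D K d ≠ 0 :=
    IsFractionRing.to_map_ne_zero_of_mem_nonZeroDivisors (mem_nonZeroDivisors_of_ne_zero hd)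
  have hinv : (1 : Submodule D K) / I ≠ ⊥ :=
    Submodule.ne_bot_iff _ |>.mpr
      ⟨algebraMap D K d, Submodule.mem_div_iff_forall_mul_mem.mpr hdI, hd0⟩
  have hdivle : (1 : Submodule D K) / I ≤ s.star 1 / I := by
    rw [Submodule.le_div_iff_mul_le]
    exact le_trans (Submodule.le_div_iff_mul_le.mp le_rfl) (s.le_star 1 h1)
  have hprod : I * ((1 : Submodule D K) / I) ≠ ⊥ := my_mul_ne_bot hIne hinv
  have hprodle : I * ((1 : Submodule D K) / I) ≤ I * (s.star 1 / I) :=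
    mul_le_mul' le_rfl hdivle
  have hprod2 : I * (s.star 1 / I) ≠ ⊥ := my_ne_bot_mono hprodle hprod
  have hq_le : I * (s.star 1 / I) ≤ s.star 1 := by
    rw [mul_comm]
    exact Submodule.le_div_iff_mul_le.mp le_rfl
  constructor
  · intro hq
    unfold IsQuasiStarInv at hq
    unfold IsStarInv
    have hdiv : s.star ((1 : Submodule D K) / I) = s.star 1 / I := my_star_div s hs h1 hIne hfg
    apply le_antisymm
    · have hm : s.star (I * ((1 : Submodule D K) / I)) ≤ s.star (I * (s.star 1 / I)) :=
        s.star_mono _ _ hprod hprod2 hprodle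
      exact hm.trans (le_of_eq hq)
    · have hB : I * (s.star 1 / I) ≤ s.star (I * (1 / I)) := by
        rw [← hdiv]
        exact my_mul_star_le s hinv hprod
      have h3 := s.star_mono _ _ hprod2
        (my_ne_bot_mono (s.le_star _ hprod) hprod) hB
      rwa [hq, s.star_idem _ hprod] at h3
  · intro hsi
    unfold IsStarInv at hsi
    unfold IsQuasiStarInv
    apply le_antisymm
    · have hm : s.star (I * (s.star 1 / I)) ≤ s.star (s.star 1) :=
        s.star_mono _ _ hprod2 hstar1 hq_le
      exact hm.trans (le_of_eq (s.star_idem 1 h1))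
    · have hm : s.star (I * ((1 : Submodule D K) / I)) ≤ s.star (I * (s.star 1 / I)) :=
        s.star_mono _ _ hprod hprod2 hprodle
      exact (le_of_eq hsi.symm).trans hm
end
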